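/- arXiv:1802.08809 — 6 statements merged into one kernel-verified Lean document; each statement's English description precedes it below -/
import Mathlib

section
/- In a semimodular lattice with no infinite chains in intervals, all maximal chains in any interval [x, y] have the same length (Jordan–Dedekind chain condition). -/
/-- A maximal chain in a subset `I` of a lattice: a chain contained in `I`
that is not properly contained in any other chain contained in `I`. -/
def IsMaximalChainIn {L : Type*} [Lattice L] (I : Set L) (c : Set L) : Prop :=
  c ⊆ I ∧ IsChain (· ≤ ·) c ∧
    ∀ c' : Set L, c' ⊆ I → IsChain (· ≤ ·) c' → c ⊆ c' → c' = c

section Aux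

variable {L : Type*} [Lattice L]

/-- A maximal chain in `[x,y]` contains both endpoints. -/
lemma maxChainIn_endpoints {x y : L} (hxy : x ≤ y) {c : Set L}
    (h : IsMaximalChainIn (Set.Icc x y) c) : x ∈ c ∧ y ∈ c := by
  obtain ⟨hsub, hch, hmax⟩ := h
  have hch' : IsChain (· ≤ ·) (insert x (insert y c)) := by
    refine IsChain.insert (IsChain.insert hch ?_) ?_
    · intro b hb _; exact Or.inr (hsub hb).2
    · intro b hb _
      rcases hb with rfl | hb
      · exact Or.inl hxy
      · exact Or.inl (hsub hb).1
  have hsub' : insert x (insert y c) ⊆ Set.Icc x y := by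
    intro z hz
    rcases hz with rfl | rfl | hz
    · exact ⟨le_refl _, hxy⟩
    · exact ⟨hxy, le_refl _⟩
    · exact hsub hz
  have heq := hmax _ hsub' hch' (fun z hz => Or.inr (Or.inr hz))
  constructor
  · rw [← heq]; exact Or.inl rfl
  · rw [← heq]; exact Or.inr (Or.inl rfl)

/-- Every chain in a set extends to a maximal chain in that set. -/
lemma exists_maxChainIn (I : Set L) {c0 : Set L} (h0 : c0 ⊆ I)
    (hch0 : IsChain (· ≤ ·) c0) :
    ∃ c : Set L, IsMaximalChainIn I c ∧ c0 ⊆ c := by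
  have H : ∀ S ⊆ {c : Set L | c ⊆ I ∧ IsChain (· ≤ ·) c}, IsChain (· ⊆ ·) S →
      S.Nonempty → ∃ ub ∈ {c : Set L | c ⊆ I ∧ IsChain (· ≤ ·) c}, ∀ s ∈ S, s ⊆ ub := by
    intro S hS hSch hSne
    refine ⟨⋃₀ S, ⟨?_, ?_⟩, fun s hs => Set.subset_sUnion_of_mem hs⟩
    · intro z hz
      obtain ⟨s, hs, hzs⟩ := hz
      exact (hS hs).1 hzs
    · intro z hz w hw hzw
      obtain ⟨s, hs, hzs⟩ := hz
      obtain ⟨t, ht, hwt⟩ := hw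
      rcases eq_or_ne s t with rfl | hst
      · exact (hS hs).2 hzs hwt hzw
      · rcases hSch hs ht hst with h | h
        · exact (hS ht).2 (h hzs) hwt hzw
        · exact (hS hs).2 hzs (h hwt) hzw
  obtain ⟨m, hm0, hmem, hmax⟩ :=
    zorn_subset_nonempty {c : Set L | c ⊆ I ∧ IsChain (· ≤ ·) c} H c0 ⟨h0, hch0⟩
  refine ⟨m, ⟨hmem.1, hmem.2, ?_⟩, hm0⟩
  intro c' hc'I hc'ch hmc'
  exact (hmax ⟨hc'I, hc'ch⟩ hmc').antisymm hmc'

/-- A finite nonempty chain has a least element. -/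
lemma chain_exists_least {s : Set L} (hs : s.Finite) (hne : s.Nonempty)
    (hch : IsChain (· ≤ ·) s) : ∃ a ∈ s, ∀ w ∈ s, a ≤ w := by
  obtain ⟨a, has, ha⟩ : ∃ a ∈ s, ∀ a' ∈ s, a' ≤ a → a = a' := by
    obtain ⟨a, has, ha⟩ := Set.Finite.exists_minimalFor id s hs hne
    exact ⟨a, has, fun w hw h => le_antisymm (ha hw h) h⟩
  refine ⟨a, has, fun w hw => ?_⟩
  rcases eq_or_ne a w with rfl | haw
  · exact le_refl _
  · rcases hch has hw haw with h | h
    · exact h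
    · exact le_of_eq (ha w hw h)

/-- Removing the bottom of a maximal chain in `[u,v]` yields a maximal chain
in `[a,v]` where `a` is the least element of the rest. -/
lemma maxChainIn_drop_bot {u v a : L} {c : Set L}
    (h : IsMaximalChainIn (Set.Icc u v) c) (hu : u ∈ c)
    (hua : u < a) (ha : ∀ w ∈ c \ {u}, a ≤ w) :
    IsMaximalChainIn (Set.Icc a v) (c \ {u}) := by
  obtain ⟨hsub, hch, hmax⟩ := h
  refine ⟨?_, hch.mono Set.diff_subset, ?_⟩
  · intro w hw
    exact ⟨ha w hw, (hsub hw.1).2⟩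
  · intro c' hc'I hc'ch hcc'
    have hic : IsChain (· ≤ ·) (insert u c') := by
      refine hc'ch.insert ?_
      intro b hb _
      exact Or.inl (le_trans hua.le (hc'I hb).1)
    have hisub : insert u c' ⊆ Set.Icc u v := by
      intro z hz
      rcases hz with rfl | hz
      · exact ⟨le_refl _, (hsub hu).2⟩
      · exact ⟨le_trans hua.le (hc'I hz).1, (hc'I hz).2⟩
    have hcins : c ⊆ insert u c' := by
      intro w hw
      rcases eq_or_ne w u with rfl | hwu
      · exact Or.inl rfl
      · exact Or.inr (hcc' ⟨hw, hwu⟩)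
    have heq := hmax _ hisub hic hcins
    apply Set.Subset.antisymm _ hcc'
    intro z hz
    have hznu : z ≠ u := by
      rintro rfl
      exact absurd (hc'I hz).1 (not_le_of_gt hua)
    have : z ∈ insert u c' := Or.inr hz
    rw [heq] at this
    exact ⟨this, hznu⟩

/-- Adding a new bottom `a ⋖ m` below a maximal chain in `[m,v]` yields a
maximal chain in `[a,v]`. -/
lemma maxChainIn_insert_bot {m v a : L} {e : Set L}
    (he : IsMaximalChainIn (Set.Icc m v) e) (hmv : m ≤ v)
    (ham : a ⋖ m) :
    IsMaximalChainIn (Set.Icc a v) (insert a e) := by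
  obtain ⟨hm_mem, -⟩ := maxChainIn_endpoints hmv he
  obtain ⟨hsub, hch, hmax⟩ := he
  have hav : a ≤ v := le_trans ham.1.le hmv
  refine ⟨?_, ?_, ?_⟩
  · intro z hz
    rcases hz with rfl | hz
    · exact ⟨le_refl _, hav⟩
    · exact ⟨le_trans ham.1.le (hsub hz).1, (hsub hz).2⟩
  · refine hch.insert ?_
    intro b hb _
    exact Or.inl (le_trans ham.1.le (hsub hb).1)
  · intro c' hc'I hc'ch hac'
    have hec' : e ⊆ c' := fun z hz => hac' (Or.inr hz)
    have hmc' : m ∈ c' := hec' hm_mem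
    apply Set.Subset.antisymm _ hac'
    intro z hz
    rcases hc'ch.total hz hmc' with h | h
    · -- z ≤ m
      rcases eq_or_ne z m with rfl | hzm
      · exact Or.inr hm_mem
      have hzlt : z < m := lt_of_le_of_ne h hzm
      have haz : a ≤ z := (hc'I hz).1
      rcases eq_or_ne z a with rfl | hza
      · exact Or.inl rfl
      · exact absurd hzlt (ham.2 (lt_of_le_of_ne haz (Ne.symm hza)))
    · -- m ≤ z : z lies in the part above m, which equals e by maximality of e
      have hsub2 : c' ∩ Set.Icc m v ⊆ Set.Icc m v := Set.inter_subset_right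
      have hch2 : IsChain (· ≤ ·) (c' ∩ Set.Icc m v) :=
        hc'ch.mono Set.inter_subset_left
      have hee : e ⊆ c' ∩ Set.Icc m v := fun w hw => ⟨hec' hw, hsub hw⟩
      have heq := hmax _ hsub2 hch2 hee
      have : z ∈ c' ∩ Set.Icc m v := ⟨hz, h, (hc'I hz).2⟩
      rw [heq] at this
      exact Or.inr this

/-- The key induction: in a semimodular lattice with finite chains in
intervals, all maximal chains of `[u,v]` have the same cardinality. -/
lemma jordan_dedekind_key {L : Type*} [Lattice L]
    (hfin : ∀ x y : L, ∀ c : Set L, c ⊆ Set.Icc x y → IsChain (· ≤ ·) c → c.Finite)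
    (hsemi : ∀ x a : L, x ⊓ a ⋖ a → x ⋖ x ⊔ a) :
    ∀ n : ℕ, ∀ u v : L, u ≤ v → ∀ c d : Set L,
      IsMaximalChainIn (Set.Icc u v) c → IsMaximalChainIn (Set.Icc u v) d →
      c.ncard = n → d.ncard = n := by
  intro n
  induction n using Nat.strong_induction_on with
  | _ n IH =>
  intro u v huv c d hc hd hcn
  obtain ⟨huc, hvc⟩ := maxChainIn_endpoints huv hc
  obtain ⟨hud, hvd⟩ := maxChainIn_endpoints huv hd
  have hcfin : c.Finite := hfin u v c hc.1 hc.2.1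
  have hdfin : d.Finite := hfin u v d hd.1 hd.2.1
  rcases eq_or_lt_of_le huv with rfl | huv'
  · -- trivial case u = v
    have hcu : c = {u} := by
      apply Set.Subset.antisymm
      · intro z hz
        have := hc.1 hz
        exact le_antisymm this.2 this.1
      · intro z hz; rcases hz with rfl; exact huc
    have hdu : d = {u} := by
      apply Set.Subset.antisymm
      · intro z hz
        have := hd.1 hz
        exact le_antisymm this.2 this.1
      · intro z hz; rcases hz with rfl; exact hud
    rw [← hcn, hcu, hdu]
  · -- u < v
    -- least element of c \ {u}
    obtain ⟨a, hac, ha⟩ := chain_exists_least (hcfin.diff (t := {u}))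
      ⟨v, hvc, fun h => huv'.ne' (by simpa using h)⟩ (hc.2.1.mono Set.diff_subset)
    obtain ⟨b, hbd, hb⟩ := chain_exists_least (hdfin.diff (t := {u}))
      ⟨v, hvd, fun h => huv'.ne' (by simpa using h)⟩ (hd.2.1.mono Set.diff_subset)
    have hua : u < a := lt_of_le_of_ne (hc.1 hac.1).1 (fun h => hac.2 h.symm)
    have hub : u < b := lt_of_le_of_ne (hd.1 hbd.1).1 (fun h => hbd.2 h.symm)
    -- u is covered by a
    have hcov_ua : u ⋖ a := by
      refine ⟨hua, fun z huz hza => ?_⟩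
      have hzc : z ∈ c := by
        have hch' : IsChain (· ≤ ·) (insert z c) := by
          refine hc.2.1.insert ?_
          intro w hw _
          rcases eq_or_ne w u with rfl | hwu
          · exact Or.inr huz.le
          · exact Or.inl (le_trans hza.le (ha w ⟨hw, hwu⟩))
        have hsub' : insert z c ⊆ Set.Icc u v := by
          intro w hw
          rcases hw with rfl | hw
          · exact ⟨huz.le, le_trans hza.le (hc.1 hac.1).2⟩
          · exact hc.1 hw
        have := hc.2.2 _ hsub' hch' (Set.subset_insert _ _)
        rw [← this]; exact Or.inl rfl
      exact absurd (ha z ⟨hzc, ne_of_gt huz⟩) (not_le_of_gt hza)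
    have hcov_ub : u ⋖ b := by
      refine ⟨hub, fun z huz hzb => ?_⟩
      have hzd : z ∈ d := by
        have hch' : IsChain (· ≤ ·) (insert z d) := by
          refine hd.2.1.insert ?_
          intro w hw _
          rcases eq_or_ne w u with rfl | hwu
          · exact Or.inr huz.le
          · exact Or.inl (le_trans hzb.le (hb w ⟨hw, hwu⟩))
        have hsub' : insert z d ⊆ Set.Icc u v := by
          intro w hw
          rcases hw with rfl | hw
          · exact ⟨huz.le, le_trans hzb.le (hd.1 hbd.1).2⟩
          · exact hd.1 hw
        have := hd.2.2 _ hsub' hch' (Set.subset_insert _ _)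
        rw [← this]; exact Or.inl rfl
      exact absurd (hb z ⟨hzd, ne_of_gt huz⟩) (not_le_of_gt hzb)
    -- dropped chains
    have hcdrop : IsMaximalChainIn (Set.Icc a v) (c \ {u}) :=
      maxChainIn_drop_bot hc huc hua ha
    have hddrop : IsMaximalChainIn (Set.Icc b v) (d \ {u}) :=
      maxChainIn_drop_bot hd hud hub hb
    -- cardinalities
    obtain ⟨k, hk⟩ : ∃ k, (c \ {u}).ncard = k := ⟨_, rfl⟩
    have hnk : n = k + 1 := by
      rw [← hcn, ← hk, Set.ncard_diff_singleton_add_one huc hcfin]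
    have hkd : (d \ {u}).ncard = k → d.ncard = n := by
      intro h
      rw [hnk, ← h, Set.ncard_diff_singleton_add_one hud hdfin]
    have hav : a ≤ v := (hc.1 hac.1).2
    have hbv : b ≤ v := (hd.1 hbd.1).2
    rcases eq_or_ne a b with rfl | hab
    · -- same first step
      exact hkd (IH k (by omega) a v hav _ _ hcdrop hddrop hk)
    · -- different first steps
      have hinf : a ⊓ b = u := by
        have h1 : u ≤ a ⊓ b := le_inf hua.le hub.le
        rcases eq_or_ne (a ⊓ b) u with h | h
        · exact h
        · exfalso
          have hlt : u < a ⊓ b := lt_of_le_of_ne h1 (Ne.symm h)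
          have h2 : a ⊓ b ≤ a := inf_le_left
          have h3 : a ⊓ b = a := by
            by_contra h4
            exact hcov_ua.2 hlt (lt_of_le_of_ne h2 h4)
          have hab' : a ≤ b := h3 ▸ inf_le_right
          have : a = b := by
            by_contra h5
            exact hcov_ub.2 (h3 ▸ hlt) (lt_of_le_of_ne hab' h5)
          exact hab this
      set m := a ⊔ b with hm
      have hcov_am : a ⋖ m := by
        have := hsemi a b (by rwa [hinf])
        exact this
      have hcov_bm : b ⋖ m := by
        have := hsemi b a (by rwa [inf_comm b a, hinf])
        rwa [sup_comm b a] at this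
      have hmv : m ≤ v := sup_le hav hbv
      -- a maximal chain in [m, v]
      obtain ⟨e, he, -⟩ := exists_maxChainIn (Set.Icc m v)
        (Set.singleton_subset_iff.mpr ⟨le_refl m, hmv⟩)
        (Set.subsingleton_singleton.isChain)
      have hefin : e.Finite := hfin m v e he.1 he.2.1
      have hanotin : a ∉ e := fun h => absurd (he.1 h).1 (not_le_of_gt hcov_am.1)
      have hbnotin : b ∉ e := fun h => absurd (he.1 h).1 (not_le_of_gt hcov_bm.1)
      have hea : IsMaximalChainIn (Set.Icc a v) (insert a e) :=
        maxChainIn_insert_bot he hmv hcov_am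
      have heb : IsMaximalChainIn (Set.Icc b v) (insert b e) :=
        maxChainIn_insert_bot he hmv hcov_bm
      have hkea : (insert a e).ncard = k :=
        IH k (by omega) a v hav _ _ hcdrop hea hk
      have hcarda : e.ncard + 1 = k := by
        rw [← hkea, Set.ncard_insert_of_notMem hanotin hefin]
      have hcardb : (insert b e).ncard = k := by
        rw [Set.ncard_insert_of_notMem hbnotin hefin, hcarda]
      exact hkd (IH k (by omega) b v hbv _ _ heb hddrop hcardb)

end Aux

/-- Jordan–Dedekind chain condition: in a semimodular lattice with no infinite
chains in intervals, any two maximal chains of an interval `[x, y]` have the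
same length (equivalently, the same cardinality). -/
theorem stmt2 {L : Type*} [Lattice L]
    (hfin : ∀ x y : L, ∀ c : Set L, c ⊆ Set.Icc x y → IsChain (· ≤ ·) c → c.Finite)
    (hsemi : ∀ x a : L, x ⊓ a ⋖ a → x ⋖ x ⊔ a)
    {x y : L} (hxy : x ≤ y)
    {c₁ c₂ : Set L}
    (h1 : IsMaximalChainIn (Set.Icc x y) c₁)
    (h2 : IsMaximalChainIn (Set.Icc x y) c₂) :
    c₁.ncard = c₂.ncard :=
  (jordan_dedekind_key hfin hsemi c₁.ncard x y hxy c₁ c₂ h1 h2 rfl).symm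
end

section
/- Let L be a uniform semimodular lattice with ascending operator x ↦ x⁺. The inverse operator is given by x⁻ = meet of all elements covered by x; in particular, every element y covered by x⁺ satisfies x ≤ y ≤ x⁺. -/
namespace Stmt12Aux

variable {L : Type*} [Lattice L]

private lemma chain_no_strict
    (hfin : ∀ x y : L, ∀ c : Set L, c ⊆ Set.Icc x y → IsChain (· ≤ ·) c → c.Finite)
    (a b : L) (f : ℕ → L) (hmem : ∀ n, f n ∈ Set.Icc a b)
    (hinj : Function.Injective f)
    (hcomp : ∀ m n : ℕ, f m ≤ f n ∨ f n ≤ f m) : False := by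
  have hchain : IsChain (· ≤ ·) (Set.range f) := by
    rintro _ ⟨m, rfl⟩ _ ⟨n, rfl⟩ _
    exact hcomp m n
  have hfin' := hfin a b (Set.range f) (by rintro _ ⟨n, rfl⟩; exact hmem n) hchain
  exact (Set.infinite_range_of_injective hinj) hfin'

private lemma wf_lt
    (hfin : ∀ x y : L, ∀ c : Set L, c ⊆ Set.Icc x y → IsChain (· ≤ ·) c → c.Finite)
    (a b : L) :
    WellFounded (fun p q : Set.Icc a b => (p : L) < (q : L)) := by
  haveI : IsStrictOrder (Set.Icc a b) (fun p q : Set.Icc a b => (p : L) < (q : L)) :=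
    { irrefl := fun _ => lt_irrefl _, trans := fun _ _ _ h1 h2 => h1.trans h2 }
  rw [RelEmbedding.wellFounded_iff_isEmpty]
  constructor
  intro f
  have hanti : StrictAnti (fun n => ((f n : Set.Icc a b) : L)) := by
    intro m n hmn
    exact f.map_rel_iff.mpr hmn
  exact chain_no_strict hfin a b _ (fun n => (f n).2) hanti.injective
    (fun m n => by
      rcases lt_trichotomy m n with h | h | h
      · exact Or.inr (hanti h).le
      · exact Or.inl (by rw [h])
      · exact Or.inl (hanti h).le)

private lemma wf_gt
    (hfin : ∀ x y : L, ∀ c : Set L, c ⊆ Set.Icc x y → IsChain (· ≤ ·) c → c.Finite)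
    (a b : L) :
    WellFounded (fun p q : Set.Icc a b => (q : L) < (p : L)) := by
  haveI : IsStrictOrder (Set.Icc a b) (fun p q : Set.Icc a b => (q : L) < (p : L)) :=
    { irrefl := fun _ => lt_irrefl _, trans := fun _ _ _ h1 h2 => h2.trans h1 }
  rw [RelEmbedding.wellFounded_iff_isEmpty]
  constructor
  intro f
  have hmono : StrictMono (fun n => ((f n : Set.Icc a b) : L)) := by
    intro m n hmn
    exact f.map_rel_iff.mpr hmn
  exact chain_no_strict hfin a b _ (fun n => (f n).2) hmono.injective
    (fun m n => by
      rcases lt_trichotomy m n with h | h | h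
      · exact Or.inl (hmono h).le
      · exact Or.inl (by rw [h])
      · exact Or.inr (hmono h).le)

private lemma exists_covBy
    (hfin : ∀ x y : L, ∀ c : Set L, c ⊆ Set.Icc x y → IsChain (· ≤ ·) c → c.Finite)
    {a b : L} (h : a < b) : ∃ c, a ⋖ c ∧ c ≤ b := by
  obtain ⟨m, hm, hmin⟩ := (wf_lt hfin a b).has_min
    {z : Set.Icc a b | a < (z : L)} ⟨⟨b, h.le, le_refl b⟩, h⟩
  refine ⟨(m : L), ⟨hm, ?_⟩, m.2.2⟩
  intro w hw hwm
  exact hmin ⟨w, hw.le, hwm.le.trans m.2.2⟩ hw hwm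

private lemma exists_le_covBy
    (hfin : ∀ x y : L, ∀ c : Set L, c ⊆ Set.Icc x y → IsChain (· ≤ ·) c → c.Finite)
    {a b : L} (h : a < b) : ∃ c, a ≤ c ∧ c ⋖ b := by
  obtain ⟨m, hm, hmin⟩ := (wf_gt hfin a b).has_min
    {z : Set.Icc a b | (z : L) < b} ⟨⟨a, le_refl a, h.le⟩, h⟩
  refine ⟨(m : L), m.2.1, hm, ?_⟩
  intro w hmw hwb
  exact hmin ⟨w, m.2.1.trans hmw.le, hwb.le⟩ hwb hmw

/-- Chains of covers of a given length. -/
private inductive CC : L → L → ℕ → Prop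
  | refl (a : L) : CC a a 0
  | cons {a b c : L} {n : ℕ} : a ⋖ b → CC b c n → CC a c (n + 1)

private lemma CC.eq_of_len_zero {a b : L} (h : CC a b 0) : a = b := by
  cases h; rfl

private lemma CC.le {a b : L} {n : ℕ} (h : CC a b n) : a ≤ b := by
  induction h with
  | refl a => exact le_refl a
  | cons hab _ ih => exact hab.le.trans ih

private lemma CC.snoc {a b c : L} {n : ℕ} (h : CC a b n) (hbc : b ⋖ c) : CC a c (n + 1) := by
  induction h with
  | refl a => exact (CC.refl c).cons hbc
  | cons hab _ ih => exact (ih hbc).cons hab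

private lemma CC.append {a b c : L} {m n : ℕ} (h1 : CC a b m) (h2 : CC b c n) :
    CC a c (m + n) := by
  induction h1 with
  | refl a => simpa using h2
  | @cons a' b' c' m' hab _ ih =>
    have h3 := CC.cons hab (ih h2)
    have heq : m' + 1 + n = m' + n + 1 := by omega
    rw [heq]
    exact h3

private lemma exists_cc
    (hfin : ∀ x y : L, ∀ c : Set L, c ⊆ Set.Icc x y → IsChain (· ≤ ·) c → c.Finite)
    {a b : L} (h : a ≤ b) : ∃ n, CC a b n := by
  suffices H : ∀ z : Set.Icc a b, ∃ n, CC (z : L) b n from H ⟨a, le_refl a, h⟩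
  intro z
  refine (wf_gt hfin a b).induction (C := fun z => ∃ n, CC (z : L) b n) z ?_
  intro p ih
  rcases (p.2.2 : (p : L) ≤ b).lt_or_eq with hlt | heq
  · obtain ⟨c, hpc, hcb⟩ := exists_covBy hfin hlt
    obtain ⟨n, hn⟩ := ih ⟨c, p.2.1.trans hpc.le, hcb⟩ hpc.lt
    exact ⟨n + 1, hn.cons hpc⟩
  · exact ⟨0, by rw [heq]; exact CC.refl b⟩

/-- Jordan–Hölder for cover chains in an (upper) semimodular chain-finite lattice. -/
private lemma jh
    (hfin : ∀ x y : L, ∀ c : Set L, c ⊆ Set.Icc x y → IsChain (· ≤ ·) c → c.Finite)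
    (hsemi : ∀ x a : L, x ⊓ a ⋖ a → x ⋖ x ⊔ a) :
    ∀ m : ℕ, ∀ {a b : L} {n : ℕ}, CC a b m → CC a b n → m = n := by
  intro m
  induction m with
  | zero =>
    intro a b n h1 h2
    have hab : a = b := by cases h1; rfl
    subst hab
    cases h2 with
    | refl => rfl
    | cons hac h' => exact absurd (hac.lt.trans_le h'.le) (lt_irrefl a)
  | succ m ih =>
    intro a b n h1 h2
    cases h1 with
    | @cons _ p _ _ hap hp =>
      cases h2 with
      | refl => exact absurd (hap.lt.trans_le hp.le) (lt_irrefl a)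
      | @cons _ q _ n' haq hq =>
        by_cases hpq : p = q
        · subst hpq
          have := ih hp hq
          omega
        · have hmeet : p ⊓ q = a := by
            have h1 : a ≤ p ⊓ q := le_inf hap.lt.le haq.lt.le
            rcases h1.lt_or_eq with hlt | heq
            · exfalso
              rcases (inf_le_left : p ⊓ q ≤ p).lt_or_eq with h2 | h2
              · exact hap.2 hlt h2
              · have hple : p ≤ q := by rw [← h2]; exact inf_le_right
                exact haq.2 hap.lt (hple.lt_of_ne hpq)
            · exact heq.symm
          have hpz : p ⋖ p ⊔ q := by
            refine hsemi p q ?_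
            rw [hmeet]; exact haq
          have hqz : q ⋖ p ⊔ q := by
            have h := hsemi q p (by rw [inf_comm q p, hmeet]; exact hap)
            rwa [sup_comm q p] at h
          obtain ⟨k, hk⟩ := exists_cc hfin (sup_le hp.le hq.le)
          have h1 : CC p b (k + 1) := CC.cons hpz hk
          have hmk : m = k + 1 := ih hp h1
          have h2 : CC q b m := by rw [hmk]; exact CC.cons hqz hk
          have := ih h2 hq
          omega

end Stmt12Aux

open Stmt12Aux

/-- In a uniform semimodular lattice with ascending operator `e`, the inverse
operator is given by `x⁻ = ⋀ {y : y ⋖ x}`; in particular every element `y`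
covered by `x⁺` satisfies `x ≤ y ≤ x⁺`. -/
theorem stmt12 {L : Type*} [Lattice L]
    (hfin : ∀ x y : L, ∀ c : Set L, c ⊆ Set.Icc x y → IsChain (· ≤ ·) c → c.Finite)
    (hsemi : ∀ x a : L, x ⊓ a ⋖ a → x ⋖ x ⊔ a)
    (e : L ≃o L) (he : ∀ x : L, IsLUB {y : L | x ⋖ y} (e x))
    (x : L) :
    IsGLB {y : L | y ⋖ x} (e.symm x) ∧
      ∀ y : L, y ⋖ e x → x ≤ y ∧ y ≤ e x := by
  classical
  set u := e.symm x with hu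
  have hxu : e u = x := e.apply_symm_apply x
  -- Key lemma: every element covered by `e z` is above `z`.
  have key : ∀ z y : L, y ⋖ e z → z ≤ y := by
    intro z y hyz
    have h1 : e (e.symm y) ⋖ e z := by rwa [e.apply_symm_apply]
    have h2 : e.symm y ⋖ z := (apply_covBy_apply_iff e).mp h1
    have h3 := (he (e.symm y)).1 h2
    rwa [e.apply_symm_apply] at h3
  have hlb : ∀ y ∈ {y : L | y ⋖ x}, u ≤ y := by
    intro y hy
    exact key u y (by rwa [hxu])
  refine ⟨⟨fun y hy => hlb y hy, fun b hb => ?_⟩, fun y hy => ⟨key x y hy, hy.le⟩⟩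
  -- `b` is a lower bound of the set of elements covered by `x`; show `b ≤ u`.
  by_cases hS : {y : L | y ⋖ x}.Nonempty
  · obtain ⟨y₀, hy₀⟩ := hS
    set s := b ⊔ u with hs
    have hsle : ∀ y ∈ {y : L | y ⋖ x}, s ≤ y := fun y hy => sup_le (hb hy) (hlb y hy)
    have hus : u ≤ s := le_sup_right
    have hsx : s < x := lt_of_le_of_lt (hsle y₀ hy₀) hy₀.lt
    have hJub : ∀ w, u ⋖ w → w ≤ x := fun w hw => by
      have := (he u).1 hw; rwa [hxu] at this
    have hJlub : ∀ z, (∀ w, u ⋖ w → w ≤ z) → x ≤ z := fun z hz => by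
      have := (he u).2 (fun w hw => hz w hw)
      rwa [hxu] at this
    have main : ∀ t : Set.Icc u x,
        (∃ n, CC u (t : L) n ∧ CC s (s ⊔ (t : L)) n) → ∃ n, CC u x n ∧ CC s x n := by
      intro t
      refine (wf_gt hfin u x).induction
        (C := fun t => (∃ n, CC u (t : L) n ∧ CC s (s ⊔ (t : L)) n) →
          ∃ n, CC u x n ∧ CC s x n) t ?_
      intro p ih hyp
      obtain ⟨n, hut, hst⟩ := hyp
      by_cases hx : s ⊔ (p : L) = x
      · have hpx : (p : L) = x := by
          rcases (p.2.2 : (p : L) ≤ x).lt_or_eq with h | h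
          · exfalso
            obtain ⟨y, hpy, hy⟩ := exists_le_covBy hfin h
            have hxy : x ≤ y := hx ▸ sup_le (hsle y hy) hpy
            exact absurd (hxy.trans_lt hy.lt) (lt_irrefl x)
          · exact h
        exact ⟨n, hpx ▸ hut, hx ▸ hst⟩
      · have hsplt : s ⊔ (p : L) < x := (sup_le hsx.le p.2.2).lt_of_ne hx
        have hnw : ¬ (∀ w, u ⋖ w → w ≤ s ⊔ (p : L)) :=
          fun h => absurd (hJlub _ h) hsplt.not_ge
        push_neg at hnw
        obtain ⟨w, huw, hwns⟩ := hnw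
        have hwx : w ≤ x := hJub w huw
        have hwnp : ¬ w ≤ (p : L) := fun h => hwns (h.trans le_sup_right)
        have hup : u ≤ (p : L) := p.2.1
        -- `w ⊓ p = u`
        have hwp : w ⊓ (p : L) = u := by
          have h1 : u ≤ w ⊓ (p : L) := le_inf huw.lt.le hup
          rcases h1.lt_or_eq with h | h
          · exfalso
            have h2 : w ⊓ (p : L) < w :=
              (inf_le_left : w ⊓ (p : L) ≤ w).lt_of_ne
                (fun hh => hwnp (hh ▸ inf_le_right))
            exact huw.2 h h2
          · exact h.symm
        have hcov1 : (p : L) ⋖ (p : L) ⊔ w := by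
          refine hsemi (p : L) w ?_
          have hm : (p : L) ⊓ w = u := by rw [inf_comm]; exact hwp
          rw [hm]; exact huw
        have hcov2 : s ⊔ (p : L) ⋖ (s ⊔ (p : L)) ⊔ w := by
          refine hsemi (s ⊔ (p : L)) w ?_
          have hm : (s ⊔ (p : L)) ⊓ w = u := by
            have h1 : u ≤ (s ⊔ (p : L)) ⊓ w :=
              le_inf (hus.trans le_sup_left) huw.lt.le
            rcases h1.lt_or_eq with h | h
            · exfalso
              have h2 : (s ⊔ (p : L)) ⊓ w < w :=
                (inf_le_right : (s ⊔ (p : L)) ⊓ w ≤ w).lt_of_ne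
                  (fun hh => hwns (hh ▸ inf_le_left))
              exact huw.2 h h2
            · exact h.symm
          rw [hm]; exact huw
        have hmem : (p : L) ⊔ w ∈ Set.Icc u x := ⟨hup.trans le_sup_left, sup_le p.2.2 hwx⟩
        refine ih ⟨_, hmem⟩ hcov1.lt ⟨n + 1, hut.snoc hcov1, ?_⟩
        have h3 := hst.snoc hcov2
        rwa [sup_assoc] at h3
    obtain ⟨n, h1, h2⟩ := main ⟨u, le_refl u, hus.trans hsx.le⟩
      ⟨0, CC.refl u, by rw [sup_eq_left.mpr hus]; exact CC.refl s⟩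
    obtain ⟨k, hk⟩ := exists_cc hfin hus
    have hkn := jh hfin hsemi (k + n) (hk.append h2) h1
    have hk0 : k = 0 := by omega
    subst hk0
    have hsu : u = s := hk.eq_of_len_zero
    rw [hsu]
    exact le_sup_left
  · -- No element is covered by `x`: then `u` is a maximal element.
    by_contra hbu
    have hne : u ≠ b ⊔ u := fun heq => hbu (le_sup_left.trans heq.symm.le)
    have hlt : u < b ⊔ u := lt_of_le_of_ne le_sup_right hne
    obtain ⟨c, huc, _⟩ := exists_covBy hfin hlt
    have hcx : c ≤ x := by
      have := (he u).1 huc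
      rwa [hxu] at this
    rcases hcx.lt_or_eq with h | h
    · obtain ⟨y, _, hy⟩ := exists_le_covBy hfin h
      exact hS ⟨y, hy⟩
    · exact hS ⟨u, h ▸ huc⟩
end

section
/- Let L be a uniform semimodular lattice. For every x, y ∈ L there exists k ≥ 0 such that x ≤ (y)^{+k}, where (y)^{+k} denotes the k-th iterate of the ascending operator applied to y. -/
/-- In a uniform semimodular lattice with ascending operator `e`, for all
`x, y` there exists `k ≥ 0` with `x ≤ (y)^{+k}` (the `k`-th iterate of the
ascending operator applied to `y`). -/
theorem stmt13 {L : Type*} [Lattice L]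
    (hfin : ∀ x y : L, ∀ c : Set L, c ⊆ Set.Icc x y → IsChain (· ≤ ·) c → c.Finite)
    (hsemi : ∀ x a : L, x ⊓ a ⋖ a → x ⋖ x ⊔ a)
    (e : L ≃o L) (he : ∀ x : L, IsLUB {y : L | x ⋖ y} (e x))
    (x y : L) :
    ∃ k : ℕ, x ≤ (⇑e)^[k] y := by
  -- no infinite pairwise-comparable injective sequences in intervals
  have key : ∀ a b : L, ∀ g : ℕ → L, Function.Injective g →
      (∀ m n, m < n → (g m < g n ∨ g n < g m)) → (∀ n, g n ∈ Set.Icc a b) → False := by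
    intro a b g hinj hcomp hmem
    have hchain : IsChain (· ≤ ·) (Set.range g) := by
      rintro _ ⟨m, rfl⟩ _ ⟨n, rfl⟩ hne
      rcases lt_trichotomy m n with h | h | h
      · rcases hcomp m n h with h' | h'
        exacts [Or.inl h'.le, Or.inr h'.le]
      · exact absurd (congrArg g h) hne
      · rcases hcomp n m h with h' | h'
        exacts [Or.inr h'.le, Or.inl h'.le]
    exact (Set.infinite_range_of_injective hinj)
      (hfin a b (Set.range g) (by rintro _ ⟨n, rfl⟩; exact hmem n) hchain)
  have wfGT : ∀ a b : L, WellFounded ((· > ·) : ↥(Set.Icc a b) → ↥(Set.Icc a b) → Prop) := by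
    intro a b
    rw [RelEmbedding.wellFounded_iff_isEmpty]
    constructor
    intro f
    refine key a b (fun n => ((f n : ↥(Set.Icc a b)) : L)) ?_ ?_ (fun n => (f n).2)
    · intro m n h
      have := Subtype.val_injective.comp f.injective
      exact this h
    · intro m n h
      exact Or.inl (Subtype.coe_lt_coe.mpr (f.map_rel_iff.mpr h))
  have wfLT : ∀ a b : L, WellFounded ((· < ·) : ↥(Set.Icc a b) → ↥(Set.Icc a b) → Prop) := by
    intro a b
    rw [RelEmbedding.wellFounded_iff_isEmpty]
    constructor
    intro f
    refine key a b (fun n => ((f n : ↥(Set.Icc a b)) : L)) ?_ ?_ (fun n => (f n).2)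
    · intro m n h
      have := Subtype.val_injective.comp f.injective
      exact this h
    · intro m n h
      exact Or.inr (Subtype.coe_lt_coe.mpr (f.map_rel_iff.mpr h))
  -- existence of a cover above w inside [w, x']
  have hmin : ∀ w x' : L, w < x' → ∃ c : L, w ⋖ c ∧ c ≤ x' := by
    intro w x' hwx
    obtain ⟨c, hc_mem, hc_min⟩ := (wfLT w x').has_min
      {p : ↥(Set.Icc w x') | w < (p : L)} ⟨⟨x', le_of_lt hwx, le_refl _⟩, hwx⟩
    refine ⟨(c : L), ⟨hc_mem, ?_⟩, c.2.2⟩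
    intro d hd1 hd2
    exact hc_min ⟨d, hd1.le, hd2.le.trans c.2.2⟩ hd1 (Subtype.mk_lt_mk.mpr hd2)
  -- main well-founded induction on the meet x ⊓ Y in [x ⊓ y, x]
  have main : ∀ w : ↥(Set.Icc (x ⊓ y) x), ∀ Y : L, (w : L) = x ⊓ Y →
      ∃ k : ℕ, x ≤ (⇑e)^[k] Y := by
    intro w
    induction w using (wfGT (x ⊓ y) x).induction with
    | _ w IH =>
      intro Y hwY
      by_cases hxY : x ≤ Y
      · exact ⟨0, by simpa using hxY⟩
      · have hwx : (w : L) < x := by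
          refine lt_of_le_of_ne w.2.2 (fun h => hxY ?_)
          rw [h] at hwY
          exact inf_eq_left.mp hwY.symm
        obtain ⟨c, hcov, hcx⟩ := hmin (w : L) x hwx
        have hYc : Y ⊓ c = (w : L) := by
          apply le_antisymm
          · rw [hwY]; exact le_inf (inf_le_right.trans hcx) inf_le_left
          · exact le_inf (by rw [hwY]; exact inf_le_right) hcov.le
        have hsem : Y ⋖ Y ⊔ c := hsemi Y c (by rw [hYc]; exact hcov)
        have hYe : Y ⊔ c ≤ e Y := (he Y).1 hsem
        have h1 : (w : L) ≤ x ⊓ (Y ⊔ c) := by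
          rw [hwY]; exact inf_le_inf_left x le_sup_left
        have hww' : (w : L) < x ⊓ (Y ⊔ c) := by
          refine lt_of_le_of_ne h1 (fun h => ?_)
          have hcw : c ≤ (w : L) := by rw [h]; exact le_inf hcx le_sup_right
          exact absurd (le_antisymm hcw hcov.le) hcov.lt.ne'
        have hw'mem : x ⊓ (Y ⊔ c) ∈ Set.Icc (x ⊓ y) x :=
          ⟨w.2.1.trans hww'.le, inf_le_left⟩
        obtain ⟨k, hk⟩ := IH ⟨x ⊓ (Y ⊔ c), hw'mem⟩
          (Subtype.coe_lt_coe.mp (by simpa using hww')) (Y ⊔ c) rfl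
        refine ⟨k + 1, hk.trans ?_⟩
        have hmono : (⇑e)^[k] (Y ⊔ c) ≤ (⇑e)^[k] (e Y) := (e.monotone.iterate k) hYe
        rwa [← Function.iterate_succ_apply] at hmono
  exact main ⟨x ⊓ y, le_refl _, inf_le_left⟩ y rfl
end

section
/- Let L be a uniform semimodular lattice. A chain x = e⁰ ⋖ e¹ ⋖ ⋯ ⋖ eˢ = y (each covering the previous) is a segment (i.e., e^{ℓ+1} ∉ [e^{ℓ−1}, (e^{ℓ−1})⁺] for 1 ≤ ℓ ≤ s−1) if and only if the interval [x, y] equals exactly {e⁰, e¹, …, eˢ}. -/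
section Aux

variable {L : Type*} [Lattice L]

private lemma chainMono (s : ℕ) (c : ℕ → L) (hcov : ∀ i : ℕ, i < s → c i ⋖ c (i + 1)) :
    ∀ i j : ℕ, i ≤ j → j ≤ s → c i ≤ c j := by
  intro i j hij hjs
  induction j with
  | zero =>
    have : i = 0 := Nat.le_zero.mp hij
    simp [this]
  | succ n ihn =>
    rcases Nat.lt_or_ge i (n + 1) with h | h
    · exact le_trans (ihn (Nat.lt_succ_iff.mp h) (by omega)) (hcov n (by omega)).le
    · have : i = n + 1 := le_antisymm hij h
      simp [this]

private lemma existsCov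
    (hfin : ∀ x y : L, ∀ c : Set L, c ⊆ Set.Icc x y → IsChain (· ≤ ·) c → c.Finite)
    {a b : L} (hab : a < b) : ∃ w : L, a ⋖ w ∧ w ≤ b := by
  have hz := zorn_le₀ (α := Lᵒᵈ)
      {t : Lᵒᵈ | a < OrderDual.ofDual t ∧ OrderDual.ofDual t ≤ b} ?_
  · obtain ⟨m, hm⟩ := hz
    refine ⟨OrderDual.ofDual m, ⟨hm.1.1, ?_⟩, hm.1.2⟩
    intro t hat htm
    have htb : t ≤ b := htm.le.trans hm.1.2
    have := hm.2 (y := OrderDual.toDual t) ⟨hat, htb⟩ htm.le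
    exact htm.not_ge this
  · intro ch hchS hch
    rcases Set.eq_empty_or_nonempty ch with rfl | ⟨t0, ht0⟩
    · exact ⟨OrderDual.toDual b, ⟨hab, le_rfl⟩, by simp⟩
    · set S' : Set L := {x : L | OrderDual.toDual x ∈ ch} with hS'
      have hsub : S' ⊆ Set.Icc a b := by
        intro x hx
        have := hchS hx
        exact ⟨(this.1).le, this.2⟩
      have hchain : IsChain (· ≤ ·) S' := by
        intro x hx y hy hxy
        rcases hch hx hy (fun h => hxy (congrArg OrderDual.ofDual h)) with h | h
        · exact Or.inr h
        · exact Or.inl h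
      have hfinS : S'.Finite := hfin a b S' hsub hchain
      have hne : S'.Nonempty := ⟨OrderDual.ofDual t0, ht0⟩
      obtain ⟨m, hmS, hmin⟩ := hfinS.exists_minimal hne
      refine ⟨OrderDual.toDual m, hchS hmS, ?_⟩
      intro z hz
      rcases hchain.total hmS hz with h | h
      · exact h
      · exact hmin hz h

private lemma iccEqOfSeg
    (hfin : ∀ x y : L, ∀ c : Set L, c ⊆ Set.Icc x y → IsChain (· ≤ ·) c → c.Finite)
    (hsemi : ∀ x a : L, x ⊓ a ⋖ a → x ⋖ x ⊔ a)
    (e : L ≃o L) (he : ∀ x : L, IsLUB {y : L | x ⋖ y} (e x)) :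
    ∀ s : ℕ, ∀ c : ℕ → L, (∀ i : ℕ, i < s → c i ⋖ c (i + 1)) →
      (∀ ℓ : ℕ, 1 ≤ ℓ → ℓ + 1 ≤ s → c (ℓ + 1) ∉ Set.Icc (c (ℓ - 1)) (e (c (ℓ - 1)))) →
      Set.Icc (c 0) (c s) = c '' Set.Iic s := by
  intro s
  induction s with
  | zero =>
    intro c _ _
    ext z
    simp only [Set.Icc_self, Set.mem_singleton_iff, Set.mem_image, Set.mem_Iic, Nat.le_zero]
    constructor
    · rintro rfl; exact ⟨0, rfl, rfl⟩
    · rintro ⟨i, rfl, rfl⟩; rfl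
  | succ s ih =>
    intro c hcov hseg
    have hmono := chainMono (s + 1) c hcov
    apply Set.Subset.antisymm
    · intro z hz
      have hIH : Set.Icc (c 0) (c s) = c '' Set.Iic s :=
        ih c (fun i hi => hcov i (by omega)) (fun ℓ h1 h2 => hseg ℓ h1 (by omega))
      by_cases hzs : z ≤ c s
      · have : z ∈ c '' Set.Iic s := by rw [← hIH]; exact ⟨hz.1, hzs⟩
        obtain ⟨i, hi, rfl⟩ := this
        exact ⟨i, by simpa using Nat.le_succ_of_le hi, rfl⟩
      · have hm : z ⊓ c s ∈ Set.Icc (c 0) (c s) :=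
          ⟨le_inf hz.1 (hmono 0 s (by omega) (by omega)), inf_le_right⟩
        rw [hIH] at hm
        obtain ⟨i, his, hieq⟩ := hm
        have his' : i ≤ s := his
        rcases eq_or_lt_of_le his' with rfl | hislt
        · -- i = s : c s ≤ z
          have hcsz : c i ≤ z := hieq ▸ inf_le_left
          rcases (hcov i (lt_add_one i)).eq_or_eq hcsz hz.2 with h | h
          · exact absurd (h ▸ le_rfl) hzs
          · exact ⟨i + 1, Set.mem_Iic.mpr le_rfl, h.symm⟩
        · exfalso
          have hs1 : 1 ≤ s := by omega
          have hilt : c i < z := by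
            rcases lt_or_eq_of_le (hieq ▸ inf_le_left : c i ≤ z) with h | h
            · exact h
            · exact absurd (h ▸ (hieq ▸ inf_le_right : c i ≤ c s)) hzs
          obtain ⟨w, hcw, hwz⟩ := existsCov hfin hilt
          have hwcs : ¬ w ≤ c s := by
            intro h
            exact hcw.lt.not_ge (hieq ▸ le_inf hwz h)
          have hwcs1 : c (s - 1) ⊓ w = c i := by
            rcases hcw.eq_or_eq (le_inf (hmono i (s - 1) (by omega) (by omega)) hcw.le)
                inf_le_right with h | h
            · exact h
            · exact absurd ((h ▸ inf_le_left).trans (hmono (s - 1) s (by omega) (by omega))) hwcs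
          have hcov1 : c (s - 1) ⋖ c (s - 1) ⊔ w := hsemi _ _ (by rw [hwcs1]; exact hcw)
          have hle1 : c (s - 1) ⊔ w ≤ e (c (s - 1)) := (he _).1 hcov1
          have hcovs : c (s - 1) ⋖ c s := by
            have h := hcov (s - 1) (by omega)
            rwa [Nat.sub_add_cancel hs1] at h
          have hle2 : c s ≤ e (c (s - 1)) := (he _).1 hcovs
          have hsup : c s ⊔ w = c (s + 1) := by
            rcases (hcov s (lt_add_one s)).eq_or_eq le_sup_left
                (sup_le (hmono s (s + 1) (by omega) le_rfl) (hwz.trans hz.2)) with h | h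
            · exact absurd (h ▸ le_sup_right) hwcs
            · exact h
          have hfin2 : c (s + 1) ≤ e (c (s - 1)) := by
            rw [← hsup]
            exact sup_le hle2 (le_sup_right.trans hle1)
          exact hseg s hs1 le_rfl ⟨hmono (s - 1) (s + 1) (by omega) le_rfl, hfin2⟩
    · rintro z ⟨i, his, rfl⟩
      exact ⟨hmono 0 i (by omega) his, hmono i (s + 1) his le_rfl⟩

end Aux

/-- Characterization of segments in a uniform semimodular lattice: a covering
chain `x = c 0 ⋖ c 1 ⋖ ⋯ ⋖ c s = y` is a segment (i.e.
`c (ℓ+1) ∉ [c (ℓ−1), (c (ℓ−1))⁺]` for `1 ≤ ℓ ≤ s − 1`) if and only if the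
interval `[x, y]` consists exactly of the elements `c 0, c 1, …, c s`. -/
theorem stmt14 {L : Type*} [Lattice L]
    (hfin : ∀ x y : L, ∀ c : Set L, c ⊆ Set.Icc x y → IsChain (· ≤ ·) c → c.Finite)
    (hsemi : ∀ x a : L, x ⊓ a ⋖ a → x ⋖ x ⊔ a)
    (e : L ≃o L) (he : ∀ x : L, IsLUB {y : L | x ⋖ y} (e x))
    (s : ℕ) (c : ℕ → L)
    (hcov : ∀ i : ℕ, i < s → c i ⋖ c (i + 1)) :
    (∀ ℓ : ℕ, 1 ≤ ℓ → ℓ + 1 ≤ s → c (ℓ + 1) ∉ Set.Icc (c (ℓ - 1)) (e (c (ℓ - 1)))) ↔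
      Set.Icc (c 0) (c s) = c '' Set.Iic s := by
  constructor
  · intro hseg
    exact iccEqOfSeg hfin hsemi e he s c hcov hseg
  · intro hIcc ℓ h1 h2 hmem
    obtain ⟨hx, hxe⟩ := hmem
    have hmono := chainMono s c hcov
    have hℓ : ℓ - 1 + 1 = ℓ := Nat.succ_pred_eq_of_pos h1
    have hxy : c (ℓ - 1) ⋖ c ℓ := by
      have h := hcov (ℓ - 1) (by omega)
      rwa [hℓ] at h
    have hyz : c ℓ ⋖ c (ℓ + 1) := hcov ℓ (by omega)
    have hpx : e.symm (c (ℓ + 1)) ≤ c (ℓ - 1) := by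
      have h := e.symm.monotone hxe
      simpa using h
    have hub : c ℓ ∈ upperBounds {q | e.symm (c (ℓ + 1)) ⋖ q} := by
      rintro q (hq : e.symm (c (ℓ + 1)) ⋖ q)
      have hqz : q ≤ c (ℓ + 1) := by
        have h := (he (e.symm (c (ℓ + 1)))).1 hq
        rwa [e.apply_symm_apply] at h
      by_cases hqx : q ≤ c (ℓ - 1)
      · exact hqx.trans hxy.le
      · have hqix : c (ℓ - 1) ⊓ q = e.symm (c (ℓ + 1)) := by
          rcases hq.eq_or_eq (le_inf hpx hq.le) inf_le_right with h | h
          · exact h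
          · exact absurd (h ▸ inf_le_left) hqx
        have hxq : c (ℓ - 1) ⋖ c (ℓ - 1) ⊔ q := hsemi _ _ (by rw [hqix]; exact hq)
        have hxqz : c (ℓ - 1) ⊔ q ≤ c (ℓ + 1) := sup_le (hxy.le.trans hyz.le) hqz
        have hmem2 : c (ℓ - 1) ⊔ q ∈ c '' Set.Iic s := by
          rw [← hIcc]
          exact ⟨(hmono 0 (ℓ - 1) (by omega) (by omega)).trans le_sup_left,
            hxqz.trans (hmono (ℓ + 1) s h2 le_rfl)⟩
        obtain ⟨i, his, hieq⟩ := hmem2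
        have hxi : c (ℓ - 1) ⋖ c i := hieq ▸ hxq
        have hiy : c i = c ℓ := by
          rcases le_total i ℓ with h | h
          · rcases hxy.eq_or_eq hxi.le (hmono i ℓ h (by omega)) with h' | h'
            · exact absurd h' hxi.lt.ne'
            · exact h'
          · rcases hxi.eq_or_eq hxy.le (hmono ℓ i h his) with h' | h'
            · exact absurd h' hxy.lt.ne'
            · exact h'.symm
        calc q ≤ c (ℓ - 1) ⊔ q := le_sup_right
          _ = c i := hieq.symm
          _ = c ℓ := hiy
    have hzy : c (ℓ + 1) ≤ c ℓ := by
      have h := (he (e.symm (c (ℓ + 1)))).2 hub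
      rwa [e.apply_symm_apply] at h
    exact hyz.lt.not_ge hzy
end

section
/- Let L be a uniform semimodular lattice, x ∈ L, and let (e_i^ℓ)_{ℓ≥0} for i = 1,…,k be an independent set of x-rays, meaning r_x(e_1^1 ∨ ⋯ ∨ e_k^1) = k. Then the sublattice generated by all elements of these rays is isomorphic to ℤ_+^k via (z_1,…,z_k) ↦ e_1^{z_1} ∨ ⋯ ∨ e_k^{z_k}. -/
/-- The join `x ⊔ ⋁_{i ∈ s} f i` in a lattice. -/
def foldJoin {ι L : Type*} [Lattice L] [DecidableEq ι] (s : Finset ι) (x : L)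
    (f : ι → L) : L :=
  s.fold (· ⊔ ·) x f

namespace UslAux

variable {ι L : Type*} [Lattice L] [DecidableEq ι]

lemma foldJoin_insert {s : Finset ι} {a : ι} (h : a ∉ s) (x : L) (f : ι → L) :
    foldJoin (insert a s) x f = f a ⊔ foldJoin s x f :=
  Finset.fold_insert h

lemma foldJoin_le_iff {s : Finset ι} {x c : L} {f : ι → L} :
    foldJoin s x f ≤ c ↔ x ≤ c ∧ ∀ i ∈ s, f i ≤ c := by
  induction s using Finset.induction_on with
  | empty => simp [foldJoin]
  | @insert a s ha ih =>
      rw [foldJoin_insert ha]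
      simp only [sup_le_iff, Finset.mem_insert]
      rw [ih]
      constructor
      · rintro ⟨h1, h2, h3⟩
        exact ⟨h2, fun i hi => hi.elim (fun h => h ▸ h1) (h3 i)⟩
      · rintro ⟨h1, h2⟩
        exact ⟨h2 a (Or.inl rfl), h1, fun i hi => h2 i (Or.inr hi)⟩

lemma le_foldJoin_base (s : Finset ι) (x : L) (f : ι → L) : x ≤ foldJoin s x f :=
  (foldJoin_le_iff.mp le_rfl).1

lemma le_foldJoin_of_mem {s : Finset ι} {i : ι} (hi : i ∈ s) (x : L) (f : ι → L) :
    f i ≤ foldJoin s x f :=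
  (foldJoin_le_iff.mp le_rfl).2 i hi

/-- Semimodularity in cover form gives the exchange-type cover lemma. -/
lemma covJoin (hsemi : ∀ x a : L, x ⊓ a ⋖ a → x ⋖ x ⊔ a) {a b c : L}
    (hab : a ⋖ b) (hac : a ≤ c) (hbc : ¬ b ≤ c) : c ⋖ c ⊔ b := by
  have h1 : c ⊓ b = a := by
    rcases hab.eq_or_eq (le_inf hac hab.le) inf_le_right with h | h
    · exact h
    · exact absurd (h ▸ inf_le_left) hbc
  exact hsemi c b (h1 ▸ hab)

variable {k : ℕ}

/-- The join map. -/
def V (x : L) (rays : Fin k → ℕ → L) (z : Fin k → ℕ) : L :=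
  foldJoin Finset.univ x fun i => rays i (z i)

lemma ray_le_V (x : L) (rays : Fin k → ℕ → L) (z : Fin k → ℕ) (i : Fin k) :
    rays i (z i) ≤ V x rays z := by
  unfold V; exact le_foldJoin_of_mem (Finset.mem_univ i) x (fun j => rays j (z j))

lemma x_le_V (x : L) (rays : Fin k → ℕ → L) (z : Fin k → ℕ) : x ≤ V x rays z := by
  unfold V; exact le_foldJoin_base Finset.univ x (fun j => rays j (z j))

lemma V_le_iff {x c : L} {rays : Fin k → ℕ → L} {z : Fin k → ℕ} :
    V x rays z ≤ c ↔ x ≤ c ∧ ∀ i, rays i (z i) ≤ c := by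
  rw [V, foldJoin_le_iff]
  simp

lemma V_mono {x : L} {rays : Fin k → ℕ → L} (hmono : ∀ i, Monotone (rays i))
    {z w : Fin k → ℕ} (h : z ≤ w) : V x rays z ≤ V x rays w :=
  V_le_iff.mpr ⟨x_le_V _ _ _, fun i => (hmono i (h i)).trans (ray_le_V _ _ _ _)⟩

lemma V_update {x : L} {rays : Fin k → ℕ → L} (hmono : ∀ i, Monotone (rays i))
    {z : Fin k → ℕ} {i : Fin k} {m : ℕ} (hm : z i ≤ m) :
    V x rays (Function.update z i m) = V x rays z ⊔ rays i m := by
  apply le_antisymm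
  · refine V_le_iff.mpr ⟨(x_le_V _ _ _).trans le_sup_left, fun j => ?_⟩
    by_cases hj : j = i
    · subst hj; rw [Function.update_self]; exact le_sup_right
    · rw [Function.update_of_ne hj]
      exact (ray_le_V x rays z j).trans le_sup_left
  · refine sup_le (V_mono hmono fun j => ?_) ?_
    · by_cases hj : j = i
      · subst hj; rw [Function.update_self]; exact hm
      · rw [Function.update_of_ne hj]
    · have := ray_le_V x rays (Function.update z i m) i
      rwa [Function.update_self] at this

lemma sum_update_add (z : Fin k → ℕ) (i : Fin k) (m : ℕ) :
    (∑ j, Function.update z i m j) + z i = m + ∑ j, z j := by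
  rw [Finset.sum_update_of_mem (Finset.mem_univ i), ← Finset.erase_eq,
    ← Finset.add_sum_erase _ z (Finset.mem_univ i)]
  ring

section Core

variable {L : Type*} [Lattice L] {k : ℕ} {x : L} {rays : Fin k → ℕ → L}

lemma covDown (hsemi : ∀ x a : L, x ⊓ a ⋖ a → x ⋖ x ⊔ a)
    (hmono : ∀ i, Monotone (rays i))
    (hraycov : ∀ i (ℓ : ℕ), rays i ℓ ⋖ rays i (ℓ + 1))
    {z : Fin k → ℕ} {i : Fin k} (h1 : 1 ≤ z i)
    (hA : ¬ rays i (z i) ≤ V x rays (Function.update z i (z i - 1))) :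
    V x rays (Function.update z i (z i - 1)) ⋖ V x rays z ∧
      V x rays z = V x rays (Function.update z i (z i - 1)) ⊔ rays i (z i) := by
  have heq : V x rays z
      = V x rays (Function.update z i (z i - 1)) ⊔ rays i (z i) := by
    have h2 : Function.update (Function.update z i (z i - 1)) i (z i) = z := by
      rw [Function.update_idem, Function.update_eq_self]
    have h3 := V_update (x := x) (rays := rays) hmono
      (z := Function.update z i (z i - 1)) (i := i) (m := z i)
      (by rw [Function.update_self]; omega)
    rw [h2] at h3
    exact h3
  have hcov0 : rays i (z i - 1) ⋖ rays i (z i) := by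
    have := hraycov i (z i - 1)
    rwa [Nat.sub_add_cancel h1] at this
  have hle : rays i (z i - 1) ≤ V x rays (Function.update z i (z i - 1)) := by
    have := ray_le_V x rays (Function.update z i (z i - 1)) i
    rwa [Function.update_self] at this
  constructor
  · rw [heq]; exact covJoin hsemi hcov0 hle hA
  · exact heq

lemma meetDown (hmono : ∀ i, Monotone (rays i))
    (hraycov : ∀ i (ℓ : ℕ), rays i ℓ ⋖ rays i (ℓ + 1))
    {z : Fin k → ℕ} {i : Fin k} (h1 : 1 ≤ z i)
    (hA : ¬ rays i (z i) ≤ V x rays (Function.update z i (z i - 1))) :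
    V x rays (Function.update z i (z i - 1)) ⊓ rays i (z i) = rays i (z i - 1) := by
  have hcov0 : rays i (z i - 1) ⋖ rays i (z i) := by
    have := hraycov i (z i - 1)
    rwa [Nat.sub_add_cancel h1] at this
  have hle : rays i (z i - 1) ≤ V x rays (Function.update z i (z i - 1)) := by
    have := ray_le_V x rays (Function.update z i (z i - 1)) i
    rwa [Function.update_self] at this
  rcases hcov0.eq_or_eq (le_inf hle (hmono i (Nat.sub_le _ _))) inf_le_right with h | h
  · exact h
  · exact absurd (h ▸ inf_le_left) hA

lemma caseStraight (hsemi : ∀ x a : L, x ⊓ a ⋖ a → x ⋖ x ⊔ a)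
    (e : L ≃o L) (he : ∀ a : L, IsLUB {y : L | a ⋖ y} (e a))
    (hmono : ∀ i, Monotone (rays i))
    (hraycov : ∀ i (ℓ : ℕ), rays i ℓ ⋖ rays i (ℓ + 1))
    (hraystraight : ∀ i (ℓ : ℕ), 1 ≤ ℓ →
      rays i (ℓ + 1) ∉ Set.Icc (rays i (ℓ - 1)) (e (rays i (ℓ - 1))))
    {n : ℕ}
    (IH : ∀ (z : Fin k → ℕ) (i : Fin k), (∑ j, z j) ≤ n →
      ¬ rays i (z i + 1) ≤ V x rays z)
    {z : Fin k → ℕ} {i : Fin k} (hn : (∑ j, z j) ≤ n + 1) (hzi : 1 ≤ z i) :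
    ¬ rays i (z i + 1) ≤ V x rays z := by
  intro h
  have hsum' : (∑ j, Function.update z i (z i - 1) j) ≤ n := by
    have := sum_update_add z i (z i - 1); omega
  have hA : ¬ rays i (z i) ≤ V x rays (Function.update z i (z i - 1)) := by
    have h5 := IH (Function.update z i (z i - 1)) i hsum'
    rwa [Function.update_self, Nat.sub_add_cancel hzi] at h5
  obtain ⟨hcov, heq⟩ := covDown hsemi hmono hraycov hzi hA
  have hVe : V x rays z ≤ e (V x rays (Function.update z i (z i - 1))) := (he _).1 hcov
  have hre : rays i (z i + 1) ≤ e (rays i (z i)) := (he _).1 (hraycov i (z i))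
  have hmeet := meetDown (x := x) hmono hraycov hzi hA
  have hpull : e.symm (rays i (z i + 1)) ≤ rays i (z i - 1) := by
    rw [← hmeet]
    exact le_inf ((e.symm_apply_le).mpr (h.trans hVe)) ((e.symm_apply_le).mpr hre)
  have hfin : rays i (z i + 1) ≤ e (rays i (z i - 1)) := (e.symm_apply_le).mp hpull
  exact hraystraight i (z i) hzi ⟨hmono i (by omega), hfin⟩

lemma keyA (hk : 0 < k) (hsemi : ∀ x a : L, x ⊓ a ⋖ a → x ⋖ x ⊔ a)
    (e : L ≃o L) (he : ∀ a : L, IsLUB {y : L | a ⋖ y} (e a))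
    (hray0 : ∀ i, rays i 0 = x)
    (hraycov : ∀ i (ℓ : ℕ), rays i ℓ ⋖ rays i (ℓ + 1))
    (hraystraight : ∀ i (ℓ : ℕ), 1 ≤ ℓ →
      rays i (ℓ + 1) ∉ Set.Icc (rays i (ℓ - 1)) (e (rays i (ℓ - 1))))
    (hind : ∀ i : Fin k,
      rays i 1 ⊓ foldJoin (Finset.univ.erase i) x (fun j => rays j 1) = x) :
    ∀ (z : Fin k → ℕ) (i : Fin k), ¬ rays i (z i + 1) ≤ V x rays z := by
  have hmono : ∀ i, Monotone (rays i) := fun i =>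
    monotone_nat_of_le_succ fun n => (hraycov i n).le
  suffices H : ∀ (n : ℕ) (z : Fin k → ℕ) (i : Fin k), (∑ j, z j) ≤ n →
      ¬ rays i (z i + 1) ≤ V x rays z by
    intro z i; exact H (∑ j, z j) z i le_rfl
  intro n
  induction n with
  | zero =>
      intro z i h0 h
      have hz : z i = 0 := by
        have h1 : z i ≤ ∑ j, z j := Finset.single_le_sum (fun j _ => Nat.zero_le (z j))
          (Finset.mem_univ i)
        omega
      have hVx : V x rays z ≤ x := by
        refine V_le_iff.mpr ⟨le_rfl, fun j => ?_⟩
        have hzj : z j = 0 := by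
          have h1 : z j ≤ ∑ j, z j := Finset.single_le_sum (fun j _ => Nat.zero_le (z j))
            (Finset.mem_univ j)
          omega
        rw [hzj, hray0 j]
      have hlt : x < rays i 1 := by
        have := (hraycov i 0).lt
        rwa [hray0 i] at this
      rw [hz] at h
      exact hlt.not_ge (h.trans hVx)
  | succ n IH =>
      intro z i hn h
      by_cases hzi : 1 ≤ z i
      · exact caseStraight hsemi e he hmono hraycov hraystraight IH hn hzi h
      · have hzi0 : z i = 0 := by omega
        have h1 : rays i 1 ≤ V x rays z := by
          rw [show (1 : ℕ) = z i + 1 by omega]; exact h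
        have hlt : x < rays i 1 := by
          have := (hraycov i 0).lt
          rwa [hray0 i] at this
        by_cases hsmall : ∀ j, z j ≤ 1
        · have hfold : V x rays z ≤ foldJoin (Finset.univ.erase i) x (fun j => rays j 1) := by
            refine V_le_iff.mpr ⟨le_foldJoin_base _ x (fun j => rays j 1), fun j => ?_⟩
            by_cases hj : j = i
            · subst hj; rw [hzi0, hray0]
              exact le_foldJoin_base _ x (fun j => rays j 1)
            · exact (hmono j (hsmall j)).trans
                (le_foldJoin_of_mem (Finset.mem_erase.mpr ⟨hj, Finset.mem_univ j⟩)
                  x (fun j => rays j 1))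
          have h2 : rays i 1 ⊓ foldJoin (Finset.univ.erase i) x (fun j => rays j 1)
              = rays i 1 := inf_eq_left.mpr (h1.trans hfold)
          rw [hind i] at h2
          exact hlt.ne h2
        · push_neg at hsmall
          obtain ⟨j0, hj0⟩ := hsmall
          by_cases hmin : ∃ j, 1 ≤ z j ∧ rays i 1 ≤ V x rays (Function.update z j (z j - 1))
          · obtain ⟨j, hj1, hjle⟩ := hmin
            have hij : i ≠ j := by intro hh; rw [hh] at hzi0; omega
            have hsum' : (∑ l, Function.update z j (z j - 1) l) ≤ n := by
              have := sum_update_add z j (z j - 1); omega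
            have h5 := IH (Function.update z j (z j - 1)) i hsum'
            apply h5
            rw [Function.update_of_ne hij, hzi0]
            exact hjle
          · push_neg at hmin
            have hij0 : i ≠ j0 := by intro hh; rw [hh] at hzi0; omega
            have hsum' : (∑ l, Function.update z j0 (z j0 - 1) l) ≤ n := by
              have := sum_update_add z j0 (z j0 - 1); omega
            have hA' : ¬ rays j0 (z j0) ≤ V x rays (Function.update z j0 (z j0 - 1)) := by
              have h5 := IH (Function.update z j0 (z j0 - 1)) j0 hsum'
              rwa [Function.update_self, Nat.sub_add_cancel (by omega)] at h5
            obtain ⟨hcov, heq⟩ := covDown hsemi hmono hraycov (by omega) hA'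
            have hnot : ¬ rays i 1 ≤ V x rays (Function.update z j0 (z j0 - 1)) :=
              hmin j0 (by omega)
            have hxcov : x ⋖ rays i 1 := by
              have := hraycov i 0
              rwa [hray0 i] at this
            have hVeq : V x rays (Function.update z j0 (z j0 - 1)) ⊔ rays i 1
                = V x rays z := by
              rcases hcov.eq_or_eq le_sup_left (sup_le hcov.le h1) with h' | h'
              · exact absurd (le_sup_right.trans_eq h') hnot
              · exact h'
            have hz'i : Function.update z j0 (z j0 - 1) i = 0 := by
              rw [Function.update_of_ne hij0, hzi0]
            have hVw : V x rays
                (Function.update (Function.update z j0 (z j0 - 1)) i 1)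
                = V x rays z := by
              rw [V_update hmono (by rw [hz'i]; omega)]
              exact hVeq
            have hwj0 : Function.update (Function.update z j0 (z j0 - 1)) i 1 j0
                = z j0 - 1 := by
              rw [Function.update_of_ne (Ne.symm hij0), Function.update_self]
            have hsumw : (∑ l, Function.update (Function.update z j0 (z j0 - 1)) i 1 l)
                ≤ n + 1 := by
              have hs1 := sum_update_add (Function.update z j0 (z j0 - 1)) i 1
              rw [hz'i] at hs1
              omega
            refine caseStraight hsemi e he hmono hraycov hraystraight IH hsumw
              (i := j0) (by omega : 1 ≤ Function.update (Function.update z j0 (z j0 - 1)) i 1 j0) ?_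
            rw [hVw, show Function.update (Function.update z j0 (z j0 - 1)) i 1 j0 + 1
              = z j0 by omega]
            exact ray_le_V x rays z j0
end Core
lemma foldJoin_mem {ι L : Type*} [Lattice L] [DecidableEq ι] {T : Set L}
    (hsup : ∀ a ∈ T, ∀ b ∈ T, a ⊔ b ∈ T) {s : Finset ι} {x : L} {f : ι → L}
    (hx : x ∈ T) (hf : ∀ i ∈ s, f i ∈ T) : foldJoin s x f ∈ T := by
  induction s using Finset.induction_on with
  | empty => simpa [foldJoin] using hx
  | @insert a s ha ih =>
      rw [foldJoin_insert ha]
      exact hsup _ (hf a (Finset.mem_insert_self a s)) _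
        (ih fun i hi => hf i (Finset.mem_insert_of_mem hi))

end UslAux

open UslAux in
/-- Let `rays i` (`i = 1,…,k`) be an independent set of `x`-rays in a uniform
semimodular lattice (each an infinite covering chain starting at `x` satisfying
the segment condition, with the atoms `rays i 1` of `[x, x⁺]` independent:
`rays i 1 ⊓ ⋁_{j ≠ i} rays j 1 = x`). Then the sublattice generated by the
elements of these rays is isomorphic to `ℤ₊^k` via
`(z₁,…,z_k) ↦ rays 1 z₁ ⊔ ⋯ ⊔ rays k z_k`: this map is an order embedding, a
lattice homomorphism, and its range is the sublattice generated by the rays. -/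
theorem stmt15 {L : Type*} [Lattice L]
    (hfin : ∀ x y : L, ∀ c : Set L, c ⊆ Set.Icc x y → IsChain (· ≤ ·) c → c.Finite)
    (hsemi : ∀ x a : L, x ⊓ a ⋖ a → x ⋖ x ⊔ a)
    (e : L ≃o L) (he : ∀ x : L, IsLUB {y : L | x ⋖ y} (e x))
    (x : L) {k : ℕ} (hk : 0 < k)
    (rays : Fin k → ℕ → L)
    (hray0 : ∀ i, rays i 0 = x)
    (hraycov : ∀ i (ℓ : ℕ), rays i ℓ ⋖ rays i (ℓ + 1))
    (hraystraight : ∀ i (ℓ : ℕ), 1 ≤ ℓ →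
      rays i (ℓ + 1) ∉ Set.Icc (rays i (ℓ - 1)) (e (rays i (ℓ - 1))))
    (hind : ∀ i : Fin k,
      rays i 1 ⊓ foldJoin (Finset.univ.erase i) x (fun j => rays j 1) = x) :
    (∀ z w : Fin k → ℕ,
        (foldJoin Finset.univ x (fun i => rays i (z i)) ≤
          foldJoin Finset.univ x (fun i => rays i (w i)) ↔ z ≤ w)) ∧
    (∀ z w : Fin k → ℕ,
        foldJoin Finset.univ x (fun i => rays i ((z ⊔ w) i)) =
          foldJoin Finset.univ x (fun i => rays i (z i)) ⊔
            foldJoin Finset.univ x (fun i => rays i (w i))) ∧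
    (∀ z w : Fin k → ℕ,
        foldJoin Finset.univ x (fun i => rays i ((z ⊓ w) i)) =
          foldJoin Finset.univ x (fun i => rays i (z i)) ⊓
            foldJoin Finset.univ x (fun i => rays i (w i))) ∧
    Set.range (fun z : Fin k → ℕ => foldJoin Finset.univ x (fun i => rays i (z i))) =
      latticeClosure (⋃ i : Fin k, Set.range (rays i)) := by
  have hmono : ∀ i, Monotone (rays i) := fun i =>
    monotone_nat_of_le_succ fun n => (hraycov i n).le
  have A := keyA hk hsemi e he hray0 hraycov hraystraight hind
  -- join property
  have hVsup : ∀ z w : Fin k → ℕ, V x rays (z ⊔ w) = V x rays z ⊔ V x rays w := by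
    intro z w
    apply le_antisymm
    · refine V_le_iff.mpr ⟨(x_le_V x rays z).trans le_sup_left, fun i => ?_⟩
      rcases le_total (z i) (w i) with h' | h'
      · have hh : (z ⊔ w) i = w i := by
          simp only [Pi.sup_apply]; exact sup_eq_right.mpr h'
        rw [hh]; exact (ray_le_V x rays w i).trans le_sup_right
      · have hh : (z ⊔ w) i = z i := by
          simp only [Pi.sup_apply]; exact sup_eq_left.mpr h'
        rw [hh]; exact (ray_le_V x rays z i).trans le_sup_left
    · exact sup_le (V_mono hmono le_sup_left) (V_mono hmono le_sup_right)
  -- order reflection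
  have hreflect : ∀ z w : Fin k → ℕ, V x rays z ≤ V x rays w → z ≤ w := by
    intro z w hle i
    by_contra hc
    push_neg at hc
    have hh : rays i (w i + 1) ≤ V x rays w :=
      ((hmono i (Nat.succ_le_of_lt hc : w i + 1 ≤ z i)).trans (ray_le_V x rays z i)).trans hle
    exact A w i hh
  -- meet property
  have hGle : ∀ (n : ℕ) (z w : Fin k → ℕ), (∑ j, z j) + (∑ j, w j) ≤ n →
      V x rays z ⊓ V x rays w ≤ V x rays (z ⊓ w) := by
    intro n
    induction n with
    | zero =>
        intro z w h0
        have hzw : z ≤ w := by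
          intro j
          have h1 : z j ≤ ∑ l, z l := Finset.single_le_sum
            (fun l _ => Nat.zero_le (z l)) (Finset.mem_univ j)
          simp only [Pi.le_def] at *
          omega
        rw [inf_eq_left.mpr hzw]
        exact inf_le_left
    | succ n IH =>
        intro z w hn
        by_cases hzw : z ≤ w
        · rw [inf_eq_left.mpr hzw]; exact inf_le_left
        · have hex : ∃ i, w i < z i := by
            by_contra hcon
            push_neg at hcon
            exact hzw fun i => hcon i
          obtain ⟨i, hi⟩ := hex
          have hzi : 1 ≤ z i := by omega
          have hA' : ¬ rays i (z i) ≤ V x rays (Function.update z i (z i - 1)) := by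
            have h5 := A (Function.update z i (z i - 1)) i
            rwa [Function.update_self, Nat.sub_add_cancel hzi] at h5
          obtain ⟨hcov, heq⟩ := covDown hsemi hmono hraycov hzi hA'
          have hc : V x rays z ⊓ V x rays w
              ≤ V x rays (Function.update z i (z i - 1)) := by
            by_contra hcc
            have h2 : V x rays z
                ≤ V x rays (Function.update z i (z i - 1)) ⊔ V x rays w := by
              rcases hcov.eq_or_eq
                (c := V x rays (Function.update z i (z i - 1)) ⊔ (V x rays z ⊓ V x rays w))
                le_sup_left (sup_le hcov.le inf_le_left) with h' | h'
              · exact absurd (le_sup_right.trans_eq h') hcc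
              · exact h'.symm.le.trans (sup_le_sup_left inf_le_right _)
            have h3 : V x rays z
                ≤ V x rays (Function.update z i (z i - 1) ⊔ w) := by
              rw [hVsup]; exact h2
            have h4 : rays i ((Function.update z i (z i - 1) ⊔ w) i + 1)
                ≤ V x rays (Function.update z i (z i - 1) ⊔ w) := by
              have hh : (Function.update z i (z i - 1) ⊔ w) i + 1 = z i := by
                simp only [Pi.sup_apply, Function.update_self]
                omega
              rw [hh]
              exact (ray_le_V x rays z i).trans h3
            exact A _ i h4
          have h6 : (∑ j, Function.update z i (z i - 1) j) + (∑ j, w j) ≤ n := by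
            have := sum_update_add z i (z i - 1); omega
          have h8 : Function.update z i (z i - 1) ⊓ w = z ⊓ w := by
            funext j
            by_cases hj : j = i
            · subst hj
              simp only [Pi.inf_apply, Function.update_self]
              rw [inf_eq_right.mpr (by omega : w j ≤ z j - 1),
                inf_eq_right.mpr (by omega : w j ≤ z j)]
            · simp only [Pi.inf_apply, Function.update_of_ne hj]
          rw [← h8]
          exact (le_inf hc inf_le_right).trans
            (IH (Function.update z i (z i - 1)) w h6)
  have hVinf : ∀ z w : Fin k → ℕ, V x rays (z ⊓ w) = V x rays z ⊓ V x rays w :=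
    fun z w => le_antisymm
      (le_inf (V_mono hmono inf_le_left) (V_mono hmono inf_le_right))
      (hGle _ z w le_rfl)
  refine ⟨?_, ?_, ?_, ?_⟩
  · intro z w
    exact ⟨hreflect z w, fun h => V_mono hmono h⟩
  · intro z w
    exact hVsup z w
  · intro z w
    exact hVinf z w
  · apply Set.Subset.antisymm
    · rintro _ ⟨z, rfl⟩
      have hxmem : x ∈ latticeClosure (⋃ i : Fin k, Set.range (rays i)) := by
        apply subset_latticeClosure
        exact Set.mem_iUnion.mpr ⟨⟨0, hk⟩, ⟨0, hray0 _⟩⟩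
      exact foldJoin_mem
        (fun a ha b hb => (isSublattice_latticeClosure).supClosed ha hb)
        hxmem
        (fun i _ => subset_latticeClosure (Set.mem_iUnion.mpr ⟨i, ⟨z i, rfl⟩⟩))
    · apply latticeClosure_min
      · rintro y hy
        rw [Set.mem_iUnion] at hy
        obtain ⟨i, ℓ, rfl⟩ := hy
        refine ⟨Function.update (fun _ => 0) i ℓ, ?_⟩
        have hxr : x ≤ rays i ℓ := by
          have := hmono i (Nat.zero_le ℓ)
          rwa [hray0 i] at this
        show V x rays (Function.update (fun _ => 0) i ℓ) = rays i ℓ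
        apply le_antisymm
        · refine V_le_iff.mpr ⟨hxr, fun j => ?_⟩
          by_cases hj : j = i
          · subst hj; rw [Function.update_self]
          · rw [Function.update_of_ne hj, hray0 j]; exact hxr
        · have := ray_le_V x rays (Function.update (fun _ => 0) i ℓ) i
          rwa [Function.update_self] at this
      · exact ⟨fun a ha b hb => by
            obtain ⟨z, rfl⟩ := ha; obtain ⟨w, rfl⟩ := hb
            exact ⟨z ⊔ w, hVsup z w⟩,
          fun a ha b hb => by
            obtain ⟨z, rfl⟩ := ha; obtain ⟨w, rfl⟩ := hb
            exact ⟨z ⊓ w, hVinf z w⟩⟩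
end

section
/- Let K be a field and K(t)⁻ the subring of rational functions of degree at most 0. Let B ⊆ K(t)^n be a K(t)-basis of K(t)^n that maximizes ω(B') = deg det(B') over all K(t)-bases B' drawn from a finite set E ⊆ K(t)^n of vectors containing B. Then every vector u ∈ E lies in the K(t)⁻-module generated by B; i.e., the K(t)⁻-module generated by E is free with basis B. -/
theorem intDegree_div_aux {K : Type*} [Field K] {c d : RatFunc K} (hc : c ≠ 0) (hd : d ≠ 0) :
    (c / d).intDegree = c.intDegree - d.intDegree := by
  have h : c / d ≠ 0 := div_ne_zero hc hd
  have := RatFunc.intDegree_mul h hd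
  rw [div_mul_cancel₀ _ hd] at this
  omega

/-- Let `E ⊆ K(t)^n` be a finite set of vectors and `B` an `n`-tuple of vectors
of `E` forming a `K(t)`-basis (nonzero determinant) which maximizes
`ω(B') = deg det B'` over all bases drawn from `E`. Then every `u ∈ E` lies in
the `K(t)⁻`-module generated by `B` (where `K(t)⁻` is the ring of rational
functions of degree at most `0`); i.e. the `K(t)⁻`-module generated by `E` is
free with basis `B`. -/
theorem stmt17 {K : Type*} [Field K] {n : ℕ}
    (E : Finset (Fin n → RatFunc K))
    (B : Fin n → (Fin n → RatFunc K))
    (hBE : ∀ i, B i ∈ E)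
    (hBbasis : (Matrix.of fun i j => B j i).det ≠ 0)
    (hmax : ∀ B' : Fin n → (Fin n → RatFunc K), (∀ i, B' i ∈ E) →
      (Matrix.of fun i j => B' j i).det ≠ 0 →
      ((Matrix.of fun i j => B' j i).det).intDegree ≤
        ((Matrix.of fun i j => B j i).det).intDegree) :
    ∀ u ∈ E, ∃ lam : Fin n → RatFunc K,
      (∀ i, (lam i).intDegree ≤ 0) ∧ ∀ j, u j = ∑ i, lam i * B i j := by
  intro u hu
  set M : Matrix (Fin n) (Fin n) (RatFunc K) := Matrix.of fun i j => B j i with hM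
  set d := M.det with hd
  refine ⟨fun i => M.cramer u i / d, ?_, ?_⟩
  · intro i
    by_cases hc : M.cramer u i = 0
    · simp [hc, RatFunc.intDegree_zero]
    · have hupd : M.updateCol i u = Matrix.of fun a b => (Function.update B i u) b a := by
        ext a b
        by_cases hb : b = i <;> simp [Matrix.updateCol_apply, hb, Function.update, hM]
      have hdet : (Matrix.of fun a b => (Function.update B i u) b a).det ≠ 0 := by
        rw [← hupd, ← Matrix.cramer_apply]; exact hc
      have hle := hmax (Function.update B i u)
        (fun j => by by_cases hj : j = i <;> simp [Function.update, hj, hu, hBE]) hdet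
      have hc' : (M.cramer u i).intDegree ≤ d.intDegree := by
        rwa [Matrix.cramer_apply, hupd]
      rw [intDegree_div_aux hc hBbasis]
      omega
  · intro j
    have := congrFun (Matrix.mulVec_cramer M u) j
    rw [Matrix.mulVec, dotProduct] at this
    have hd0 : d ≠ 0 := hBbasis
    simp only [Pi.smul_apply, smul_eq_mul] at this
    have key : ∑ i, M.cramer u i * B i j = d * u j := by
      rw [← this]
      exact Finset.sum_congr rfl fun i _ => by simp [hM]; ring
    calc u j = d * u j / d := by field_simp
    _ = (∑ i, M.cramer u i * B i j) / d := by rw [key]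
    _ = ∑ i, M.cramer u i / d * B i j := by
        rw [Finset.sum_div]
        exact Finset.sum_congr rfl fun i _ => by ring
end
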